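/- arXiv:2101.00312 — 2 statements merged into one kernel-verified Lean document; each statement's English description precedes it below -/
import Mathlib

section
/- Let T and S be bounded linear operators on H that are A-selfadjoint. Then ‖T² + S²‖_A ≤ (1/2)·(‖T²‖_A + ‖S²‖_A + √((‖T²‖_A − ‖S²‖_A)² + 4‖TS‖_A²)). -/
open ContinuousLinearMap

variable {H : Type*} [NormedAddCommGroup H] [InnerProductSpace ℂ H] [CompleteSpace H]

/-- The seminorm on `H` induced by a positive operator `A`: `‖x‖_A = √⟨Ax,x⟩`. -/
noncomputable def vnA (A : H →L[ℂ] H) (x : H) : ℝ :=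
  Real.sqrt (RCLike.re (inner ℂ (A x) x : ℂ))

/-- The `A`-seminorm of an operator: `‖X‖_A = sup {‖Xx‖_A : ‖x‖_A = 1}`. -/
noncomputable def opnA (A : H →L[ℂ] H) (X : H →L[ℂ] H) : ℝ :=
  sSup ((fun x => vnA A (X x)) '' {x : H | vnA A x = 1})

/-- The `A`-numerical radius: `ω_A(X) = sup {|⟨Xx,x⟩_A| : ‖x‖_A = 1}`. -/
noncomputable def wA (A : H →L[ℂ] H) (X : H →L[ℂ] H) : ℝ :=
  sSup ((fun x => ‖(inner ℂ (A (X x)) x : ℂ)‖) '' {x : H | vnA A x = 1})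

/-- `S` is the reduced `A`-adjoint of `T`: `A ∘ S = T* ∘ A` and
`range S ⊆ closure (range A)`. -/
def IsReducedAdjA (A T S : H →L[ℂ] H) : Prop :=
  A ∘L S = (ContinuousLinearMap.adjoint T) ∘L A ∧
    Set.range S ⊆ closure (Set.range (A : H → H))

/-- `X` is `A`-selfadjoint: `A ∘ X = X* ∘ A`. -/
def IsSelfAdjA (A X : H →L[ℂ] H) : Prop :=
  A ∘L X = (ContinuousLinearMap.adjoint X) ∘L A

/-- `Re_A(T) = (T + T♯)/2`. -/
noncomputable def ReA (T Ts : H →L[ℂ] H) : H →L[ℂ] H := (2 : ℂ)⁻¹ • (T + Ts)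

/-- `Im_A(T) = (T - T♯)/(2i)`. -/
noncomputable def ImA (T Ts : H →L[ℂ] H) : H →L[ℂ] H := (2 * Complex.I)⁻¹ • (T - Ts)

lemma vnA_nonneg (A : H →L[ℂ] H) (x : H) : 0 ≤ vnA A x := Real.sqrt_nonneg _

lemma vnA_sq {A : H →L[ℂ] H} (hA : A.IsPositive) (x : H) :
    vnA A x ^ 2 = RCLike.re (inner ℂ (A x) x : ℂ) :=
  Real.sq_sqrt (hA.re_inner_nonneg_left x)

/-- The pre-inner-product core induced by a positive operator. -/
noncomputable def coreOf (A : H →L[ℂ] H) (hA : A.IsPositive) :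
    PreInnerProductSpace.Core ℂ H where
  inner x y := (inner ℂ (A x) y : ℂ)
  conj_inner_symm x y := by
    have h1 : (starRingEnd ℂ) (inner ℂ (A y) x : ℂ) = (inner ℂ x (A y) : ℂ) :=
      inner_conj_symm x (A y)
    have h2 : (inner ℂ x (A y) : ℂ) = (inner ℂ (A x) y : ℂ) := by
      conv_rhs => rw [← hA.isSelfAdjoint.adjoint_eq]
      rw [ContinuousLinearMap.adjoint_inner_left]
    exact h1.trans h2
  re_inner_nonneg x := hA.re_inner_nonneg_left x
  add_left x y z := by simp [inner_add_left]
  smul_left x y r := by simp [inner_smul_left, mul_comm]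

/-- Cauchy–Schwarz for the semi-inner product of a positive operator. -/
lemma csA {A : H →L[ℂ] H} (hA : A.IsPositive) (x y : H) :
    ‖(inner ℂ (A x) y : ℂ)‖ ≤ vnA A x * vnA A y := by
  have h : ‖(inner ℂ (A x) y : ℂ)‖ * ‖(inner ℂ (A y) x : ℂ)‖ ≤
      RCLike.re (inner ℂ (A x) x : ℂ) * RCLike.re (inner ℂ (A y) y : ℂ) :=
    @InnerProductSpace.Core.inner_mul_inner_self_le ℂ H _ _ _ (coreOf A hA) x y
  have hsymm : (inner ℂ (A y) x : ℂ) = (starRingEnd ℂ) (inner ℂ (A x) y : ℂ) :=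
    ((coreOf A hA).conj_inner_symm y x).symm
  rw [hsymm, RCLike.norm_conj, ← vnA_sq hA, ← vnA_sq hA] at h
  have h2 : ‖(inner ℂ (A x) y : ℂ)‖ ^ 2 ≤ (vnA A x * vnA A y) ^ 2 := by nlinarith [h]
  exact (pow_le_pow_iff_left₀ (norm_nonneg _)
    (mul_nonneg (vnA_nonneg A x) (vnA_nonneg A y)) two_ne_zero).mp h2

lemma re_le_vnA {A : H →L[ℂ] H} (hA : A.IsPositive) (x y : H) :
    RCLike.re (inner ℂ (A x) y : ℂ) ≤ vnA A x * vnA A y :=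
  (RCLike.re_le_norm _).trans (csA hA x y)

lemma vnA_smul (A : H →L[ℂ] H) (μ : ℂ) (z : H) : vnA A (μ • z) = ‖μ‖ * vnA A z := by
  unfold vnA
  rw [map_smul, inner_smul_left, inner_smul_right, ← mul_assoc, RCLike.conj_mul,
    ← RCLike.ofReal_pow, RCLike.re_ofReal_mul, Real.sqrt_mul (sq_nonneg _), Real.sqrt_sq (norm_nonneg μ)]

lemma moveA {A X : H →L[ℂ] H} (hX : A * X = star X * A) (u v : H) :
    (inner ℂ (A (X u)) v : ℂ) = (inner ℂ (A u) (X v) : ℂ) := by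
  have h1 : A (X u) = (ContinuousLinearMap.adjoint X) (A u) := by
    have h := congrFun (congrArg DFunLike.coe hX) u
    simpa [ContinuousLinearMap.mul_apply, star_eq_adjoint] using h
  rw [h1, ContinuousLinearMap.adjoint_inner_left]

lemma pow_selfAdjA {A X : H →L[ℂ] H} (hX : A * X = star X * A) :
    ∀ n : ℕ, A * X ^ n = star (X ^ n) * A := by
  intro n
  induction n with
  | zero => simp
  | succ n ih =>
    rw [pow_succ, ← mul_assoc, ih, mul_assoc, hX, ← mul_assoc, ← star_mul, ← pow_succ']
    rw [pow_succ]

lemma stepA {A X : H →L[ℂ] H} (hA : A.IsPositive) (hX : A * X = star X * A) (x : H) :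
    vnA A (X x) ^ 2 ≤ vnA A x * vnA A ((X * X) x) := by
  have h : (inner ℂ (A (X x)) (X x) : ℂ) = (inner ℂ (A x) ((X * X) x) : ℂ) := by
    rw [moveA hX, ContinuousLinearMap.mul_apply]
  calc vnA A (X x) ^ 2 = RCLike.re (inner ℂ (A (X x)) (X x) : ℂ) := vnA_sq hA _
    _ = RCLike.re (inner ℂ (A x) ((X * X) x) : ℂ) := by rw [h]
    _ ≤ vnA A x * vnA A ((X * X) x) := re_le_vnA hA _ _

lemma vnA_le_norm {A : H →L[ℂ] H} (hA : A.IsPositive) (y : H) :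
    vnA A y ≤ Real.sqrt ‖A‖ * ‖y‖ := by
  have h1 : RCLike.re (inner ℂ (A y) y : ℂ) ≤ ‖A‖ * ‖y‖ ^ 2 := by
    refine (RCLike.re_le_norm _).trans ((norm_inner_le_norm _ _).trans ?_)
    have := A.le_opNorm y
    nlinarith [norm_nonneg y]
  calc vnA A y ≤ Real.sqrt (‖A‖ * ‖y‖ ^ 2) := Real.sqrt_le_sqrt h1
    _ = Real.sqrt ‖A‖ * ‖y‖ := by
        rw [Real.sqrt_mul (norm_nonneg A), Real.sqrt_sq (norm_nonneg y)]

/-- Iteration lemma: an `A`-selfadjoint operator is `A`-bounded with bound `‖X‖`. -/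
lemma vnA_apply_le_opNorm {A X : H →L[ℂ] H} (hA : A.IsPositive)
    (hX : A * X = star X * A) (x : H) :
    vnA A (X x) ≤ ‖X‖ * vnA A x := by
  set t := vnA A (X x) with ht
  set s := vnA A x with hs
  have ht0 : 0 ≤ t := vnA_nonneg A _
  have hs0 : 0 ≤ s := vnA_nonneg A _
  have key : ∀ n : ℕ, t ^ (2 ^ n) ≤ vnA A ((X ^ (2 ^ n)) x) * s ^ (2 ^ n - 1) := by
    intro n
    induction n with
    | zero => simp [ht]
    | succ n ih =>
      have h1 : 0 ≤ vnA A ((X ^ 2 ^ n) x) * s ^ (2 ^ n - 1) :=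
        mul_nonneg (vnA_nonneg A _) (pow_nonneg hs0 _)
      have h2 : (t ^ 2 ^ n) ^ 2 ≤ (vnA A ((X ^ 2 ^ n) x) * s ^ (2 ^ n - 1)) ^ 2 := by
        exact pow_le_pow_left₀ (pow_nonneg ht0 _) ih 2
      have h3 : vnA A ((X ^ 2 ^ n) x) ^ 2 ≤ s * vnA A ((X ^ 2 ^ n * X ^ 2 ^ n) x) :=
        stepA hA (pow_selfAdjA hX (2 ^ n)) x
      have h4 : X ^ 2 ^ n * X ^ 2 ^ n = X ^ 2 ^ (n + 1) := by
        rw [← pow_add]; ring_nf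
      rw [h4] at h3
      have hexp : (t ^ 2 ^ n) ^ 2 = t ^ 2 ^ (n + 1) := by
        rw [← pow_mul]; ring_nf
      have hm : 1 ≤ 2 ^ n := Nat.one_le_two_pow
      have hexp2 : (s ^ (2 ^ n - 1)) ^ 2 * s = s ^ (2 ^ (n + 1) - 1) := by
        rw [← pow_mul, ← pow_succ]
        congr 1
        omega
      calc t ^ 2 ^ (n + 1) = (t ^ 2 ^ n) ^ 2 := hexp.symm
        _ ≤ (vnA A ((X ^ 2 ^ n) x) * s ^ (2 ^ n - 1)) ^ 2 := h2
        _ = vnA A ((X ^ 2 ^ n) x) ^ 2 * (s ^ (2 ^ n - 1)) ^ 2 := by ring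
        _ ≤ (s * vnA A ((X ^ 2 ^ (n + 1)) x)) * (s ^ (2 ^ n - 1)) ^ 2 := by
            exact mul_le_mul_of_nonneg_right h3 (sq_nonneg _)
        _ = vnA A ((X ^ 2 ^ (n + 1)) x) * ((s ^ (2 ^ n - 1)) ^ 2 * s) := by ring
        _ = vnA A ((X ^ 2 ^ (n + 1)) x) * s ^ (2 ^ (n + 1) - 1) := by rw [hexp2]
  -- uniform bound on the right-hand side
  set C := Real.sqrt ‖A‖ * ‖x‖ with hC
  have hC0 : 0 ≤ C := mul_nonneg (Real.sqrt_nonneg _) (norm_nonneg _)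
  have key2 : ∀ n : ℕ, t ^ (2 ^ n) ≤ C * ‖X‖ ^ (2 ^ n) * s ^ (2 ^ n - 1) := by
    intro n
    refine (key n).trans (mul_le_mul_of_nonneg_right ?_ (pow_nonneg hs0 _))
    calc vnA A ((X ^ 2 ^ n) x) ≤ Real.sqrt ‖A‖ * ‖(X ^ 2 ^ n) x‖ := vnA_le_norm hA _
      _ ≤ Real.sqrt ‖A‖ * (‖X ^ 2 ^ n‖ * ‖x‖) := by
          exact mul_le_mul_of_nonneg_left ((X ^ 2 ^ n).le_opNorm x) (Real.sqrt_nonneg _)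
      _ ≤ Real.sqrt ‖A‖ * (‖X‖ ^ 2 ^ n * ‖x‖) := by
          refine mul_le_mul_of_nonneg_left (mul_le_mul_of_nonneg_right ?_ (norm_nonneg x))
            (Real.sqrt_nonneg _)
          exact norm_pow_le' X (Nat.pos_of_ne_zero (by positivity))
      _ = C * ‖X‖ ^ 2 ^ n := by rw [hC]; ring
  by_contra hcon
  push_neg at hcon
  -- so ‖X‖ * s < t
  have hK0 : 0 ≤ ‖X‖ := norm_nonneg X
  have ht' : 0 < t := lt_of_le_of_lt (mul_nonneg hK0 hs0) hcon
  have hs' : 0 < s := by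
    rcases eq_or_lt_of_le hs0 with h | h
    · exfalso
      have := key2 1
      simp only [pow_one, ← h] at this
      -- t^2 ≤ C * ‖X‖^2 * 0
      have h0 : t ^ 2 ≤ 0 := by simpa using this
      nlinarith
    · exact h
  have hKpos : 0 < ‖X‖ := by
    rcases eq_or_lt_of_le hK0 with h | h
    · exfalso
      have := key2 1
      rw [← h] at this
      simp only [pow_succ, pow_zero, one_mul] at this
      nlinarith
    · exact h
  set r := t / (‖X‖ * s) with hr
  have hr1 : 1 < r := (one_lt_div (by positivity)).mpr hcon
  have hrM : ∀ n : ℕ, r ^ (2 ^ n) ≤ C / s := by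
    intro n
    rw [hr, div_pow, div_le_div_iff₀ (by positivity) hs']
    have hexp2 : s ^ (2 ^ n - 1) * s = s ^ (2 ^ n) := by
      rw [← pow_succ]
      congr 1
      have : 1 ≤ 2 ^ n := Nat.one_le_two_pow
      omega
    calc t ^ 2 ^ n * s ≤ (C * ‖X‖ ^ 2 ^ n * s ^ (2 ^ n - 1)) * s := by
          exact mul_le_mul_of_nonneg_right (key2 n) hs0
      _ = C * (‖X‖ ^ 2 ^ n * (s ^ (2 ^ n - 1) * s)) := by ring
      _ = C * (‖X‖ * s) ^ 2 ^ n := by rw [hexp2, mul_pow]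
  obtain ⟨n, hn⟩ := pow_unbounded_of_one_lt (R := ℝ) ((C / s) / (r - 1)) one_lt_two
  have hber := one_add_mul_le_pow (a := r - 1) (by linarith) (2 ^ n)
  rw [show (1 : ℝ) + (r - 1) = r by ring] at hber
  have h2n : ((2 : ℝ) ^ n : ℝ) = ((2 ^ n : ℕ) : ℝ) := by push_cast; ring
  have hn' : (C / s) / (r - 1) < ((2 ^ n : ℕ) : ℝ) := by rw [← h2n]; exact hn
  have hfinal : C / s < ((2 ^ n : ℕ) : ℝ) * (r - 1) := by
    rw [div_lt_iff₀ (by linarith)] at hn'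
    linarith
  have := hrM n
  nlinarith

lemma opnA_nonneg (A X : H →L[ℂ] H) : 0 ≤ opnA A X :=
  Real.sSup_nonneg (by rintro y ⟨w, _, rfl⟩; exact vnA_nonneg A _)

/-- Pair lemma: if `X` admits `Y` as an `A`-adjoint, then `X` is `A`-bounded. -/
lemma vnA_apply_le_pair {A X Y : H →L[ℂ] H} (hA : A.IsPositive)
    (hXY : A * X = star Y * A) (hYX : A * Y = star X * A) (v : H) :
    vnA A (X v) ≤ Real.sqrt ‖Y * X‖ * vnA A v := by
  have hsa : A * (Y * X) = star (Y * X) * A := by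
    rw [← mul_assoc, hYX, mul_assoc, hXY, ← mul_assoc, ← star_mul]
  have h2 : A (X v) = (star Y) (A v) := by
    have h := congrFun (congrArg DFunLike.coe hXY) v
    simpa [ContinuousLinearMap.mul_apply] using h
  have h1 : (inner ℂ (A (X v)) (X v) : ℂ) = (inner ℂ (A v) ((Y * X) v) : ℂ) := by
    rw [h2, star_eq_adjoint, ContinuousLinearMap.adjoint_inner_left,
      ContinuousLinearMap.mul_apply]
  have h3 : vnA A ((Y * X) v) ≤ ‖Y * X‖ * vnA A v := vnA_apply_le_opNorm hA hsa v
  have h4 : vnA A (X v) ^ 2 ≤ ‖Y * X‖ * vnA A v ^ 2 := by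
    calc vnA A (X v) ^ 2 = RCLike.re (inner ℂ (A (X v)) (X v) : ℂ) := vnA_sq hA _
      _ = RCLike.re (inner ℂ (A v) ((Y * X) v) : ℂ) := by rw [h1]
      _ ≤ vnA A v * vnA A ((Y * X) v) := re_le_vnA hA _ _
      _ ≤ vnA A v * (‖Y * X‖ * vnA A v) :=
          mul_le_mul_of_nonneg_left h3 (vnA_nonneg A v)
      _ = ‖Y * X‖ * vnA A v ^ 2 := by ring
  have h5 : vnA A (X v) ^ 2 ≤ (Real.sqrt ‖Y * X‖ * vnA A v) ^ 2 := by
    calc vnA A (X v) ^ 2 ≤ ‖Y * X‖ * vnA A v ^ 2 := h4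
      _ = (Real.sqrt ‖Y * X‖ * vnA A v) ^ 2 := by
          rw [mul_pow, Real.sq_sqrt (norm_nonneg _)]
  exact (pow_le_pow_iff_left₀ (vnA_nonneg A _)
    (mul_nonneg (Real.sqrt_nonneg _) (vnA_nonneg A v)) two_ne_zero).mp h5

/-- Pointwise bound by the `A`-operator seminorm, given some a priori `A`-bound. -/
lemma vnA_apply_le_opnA {A X : H →L[ℂ] H}
    (hbound : ∃ K : ℝ, ∀ z, vnA A (X z) ≤ K * vnA A z) (z : H) :
    vnA A (X z) ≤ opnA A X * vnA A z := by
  obtain ⟨K, hK⟩ := hbound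
  have hb : BddAbove ((fun x => vnA A (X x)) '' {x : H | vnA A x = 1}) := by
    refine ⟨K, ?_⟩
    rintro y ⟨w, hw, rfl⟩
    simpa [Set.mem_setOf_eq.mp hw] using hK w
  rcases eq_or_lt_of_le (vnA_nonneg A z) with h0 | h0
  · have h1 : vnA A (X z) ≤ 0 := by
      have := hK z
      rw [← h0] at this
      simpa using this
    have h2 : vnA A (X z) = 0 := le_antisymm h1 (vnA_nonneg A _)
    rw [h2, ← h0, mul_zero]
  · set s := vnA A z with hs
    have hne : ((s : ℝ) : ℂ) ≠ 0 := by
      simp only [ne_eq, Complex.ofReal_eq_zero]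
      exact ne_of_gt h0
    have h1 : vnA A (((s⁻¹ : ℝ) : ℂ) • z) = 1 := by
      rw [vnA_smul]
      simp only [Complex.norm_real, Real.norm_eq_abs, abs_of_pos (inv_pos.mpr h0)]
      field_simp
      exact hs.symm
    have hmem : vnA A (X (((s⁻¹ : ℝ) : ℂ) • z)) ∈
        (fun x => vnA A (X x)) '' {x : H | vnA A x = 1} := ⟨_, h1, rfl⟩
    have h2 : vnA A (X (((s⁻¹ : ℝ) : ℂ) • z)) ≤ opnA A X := le_csSup hb hmem
    rw [map_smul, vnA_smul] at h2
    simp only [Complex.norm_real, Real.norm_eq_abs, abs_of_pos (inv_pos.mpr h0)] at h2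
    have h3 : s⁻¹ * vnA A (X z) * s ≤ opnA A X * s :=
      mul_le_mul_of_nonneg_right h2 (le_of_lt h0)
    calc vnA A (X z) = s⁻¹ * vnA A (X z) * s := by field_simp
      _ ≤ opnA A X * s := h3

/-- Scalar key: the largest eigenvalue of `[[a,c],[c,b]]` dominates the quadratic form. -/
lemma scalar_key {a b c lam s t : ℝ} (hc : 0 ≤ c) (hs : 0 ≤ s) (ht : 0 ≤ t)
    (hlam : lam = (1 / 2) * (a + b + Real.sqrt ((a - b) ^ 2 + 4 * c ^ 2))) :
    a * s ^ 2 + 2 * c * s * t + b * t ^ 2 ≤ lam * (s ^ 2 + t ^ 2) := by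
  set D := Real.sqrt ((a - b) ^ 2 + 4 * c ^ 2) with hD
  have hD0 : 0 ≤ D := Real.sqrt_nonneg _
  have hD2 : D ^ 2 = (a - b) ^ 2 + 4 * c ^ 2 := Real.sq_sqrt (by positivity)
  have hDab : |a - b| ≤ D := by
    rw [← Real.sqrt_sq_eq_abs]
    apply Real.sqrt_le_sqrt
    nlinarith [sq_nonneg c]
  have hla : 0 ≤ lam - a := by
    rw [hlam]
    have := le_abs_self (a - b)
    linarith
  have hlb : 0 ≤ lam - b := by
    rw [hlam]
    have := neg_abs_le (a - b)
    linarith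
  have hprod : (lam - a) * (lam - b) = c ^ 2 := by
    rw [hlam]
    nlinarith [hD2]
  have hsq : Real.sqrt (lam - a) * Real.sqrt (lam - b) = c := by
    rw [← Real.sqrt_mul hla, hprod, Real.sqrt_sq hc]
  nlinarith [sq_nonneg (Real.sqrt (lam - a) * s - Real.sqrt (lam - b) * t),
    Real.sq_sqrt hla, Real.sq_sqrt hlb, hsq, mul_nonneg hs ht]

theorem stmt1 (A T S : H →L[ℂ] H) (hA : A.IsPositive) (hA0 : A ≠ 0)
    (hT : IsSelfAdjA A T) (hS : IsSelfAdjA A S) :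
    opnA A (T ^ (2:ℕ) + S ^ (2:ℕ)) ≤
      (1/2) * (opnA A (T ^ (2:ℕ)) + opnA A (S ^ (2:ℕ)) +
        Real.sqrt ((opnA A (T ^ (2:ℕ)) - opnA A (S ^ (2:ℕ)))^2 +
          4 * (opnA A (T ∘L S))^2)) := by
  have hT' : A * T = star T * A := by
    rw [ContinuousLinearMap.mul_def, ContinuousLinearMap.mul_def, star_eq_adjoint]
    exact hT
  have hS' : A * S = star S * A := by
    rw [ContinuousLinearMap.mul_def, ContinuousLinearMap.mul_def, star_eq_adjoint]
    exact hS
  set a := opnA A (T ^ (2:ℕ)) with ha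
  set b := opnA A (S ^ (2:ℕ)) with hb
  set c := opnA A (T ∘L S) with hc
  have ha0 : 0 ≤ a := opnA_nonneg A _
  have hb0 : 0 ≤ b := opnA_nonneg A _
  have hc0 : 0 ≤ c := opnA_nonneg A _
  set lam := (1/2) * (a + b + Real.sqrt ((a - b)^2 + 4 * c^2)) with hlam
  have hlam0 : 0 ≤ lam := by
    have := Real.sqrt_nonneg ((a - b)^2 + 4 * c^2)
    rw [hlam]; linarith
  -- pointwise bounds by the A-operator seminorms
  have hT2sa : A * T ^ (2:ℕ) = star (T ^ (2:ℕ)) * A := pow_selfAdjA hT' 2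
  have hS2sa : A * S ^ (2:ℕ) = star (S ^ (2:ℕ)) * A := pow_selfAdjA hS' 2
  have hT2 : ∀ z, vnA A ((T ^ (2:ℕ)) z) ≤ a * vnA A z := fun z =>
    vnA_apply_le_opnA ⟨‖T ^ (2:ℕ)‖, fun w => vnA_apply_le_opNorm hA hT2sa w⟩ z
  have hS2 : ∀ z, vnA A ((S ^ (2:ℕ)) z) ≤ b * vnA A z := fun z =>
    vnA_apply_le_opnA ⟨‖S ^ (2:ℕ)‖, fun w => vnA_apply_le_opNorm hA hS2sa w⟩ z
  have hTSpair1 : A * (T * S) = star (S * T) * A := by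
    rw [← mul_assoc, hT', mul_assoc, hS', ← mul_assoc, ← star_mul]
  have hTSpair2 : A * (S * T) = star (T * S) * A := by
    rw [← mul_assoc, hS', mul_assoc, hT', ← mul_assoc, ← star_mul]
  have hTS : ∀ z, vnA A ((T ∘L S) z) ≤ c * vnA A z := fun z =>
    vnA_apply_le_opnA ⟨Real.sqrt ‖(S * T) * (T * S)‖,
      fun w => vnA_apply_le_pair hA hTSpair1 hTSpair2 w⟩ z
  have htapp : ∀ z : H, T (T z) = (T ^ (2:ℕ)) z := fun z => by
    rw [pow_two, ContinuousLinearMap.mul_apply]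
  have hsapp : ∀ z : H, S (S z) = (S ^ (2:ℕ)) z := fun z => by
    rw [pow_two, ContinuousLinearMap.mul_apply]
  have htsapp : ∀ z : H, T (S z) = (T ∘L S) z := fun z => rfl
  -- Key lemma (squared form)
  have hKL : ∀ u v : H, vnA A (T u + S v) ^ 2 ≤ lam * (vnA A u ^ 2 + vnA A v ^ 2) := by
    intro u v
    have hexp : (inner ℂ (A (T u + S v)) (T u + S v) : ℂ) =
        inner ℂ (A (T u)) (T u) + inner ℂ (A (T u)) (S v)
        + inner ℂ (A (S v)) (T u) + inner ℂ (A (S v)) (S v) := by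
      rw [map_add, inner_add_left, inner_add_right, inner_add_right]; ring
    have hre := congrArg RCLike.re hexp
    simp only [map_add] at hre
    have e1 : RCLike.re (inner ℂ (A (T u)) (T u) : ℂ) ≤ vnA A u * (a * vnA A u) := by
      rw [moveA hT', htapp u]
      exact (re_le_vnA hA _ _).trans (mul_le_mul_of_nonneg_left (hT2 u) (vnA_nonneg A u))
    have e4 : RCLike.re (inner ℂ (A (S v)) (S v) : ℂ) ≤ vnA A v * (b * vnA A v) := by
      rw [moveA hS', hsapp v]
      exact (re_le_vnA hA _ _).trans (mul_le_mul_of_nonneg_left (hS2 v) (vnA_nonneg A v))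
    have e2 : RCLike.re (inner ℂ (A (T u)) (S v) : ℂ) ≤ vnA A u * (c * vnA A v) := by
      rw [moveA hT', htsapp v]
      exact (re_le_vnA hA _ _).trans (mul_le_mul_of_nonneg_left (hTS v) (vnA_nonneg A u))
    have e3 : RCLike.re (inner ℂ (A (S v)) (T u) : ℂ) ≤ vnA A u * (c * vnA A v) := by
      have hconj : (inner ℂ (A (S v)) (T u) : ℂ) =
          (starRingEnd ℂ) (inner ℂ (A (T u)) (S v) : ℂ) := ((coreOf A hA).conj_inner_symm (S v) (T u)).symm
      rw [hconj, RCLike.conj_re]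
      exact e2
    have hsum : RCLike.re (inner ℂ (A (T u + S v)) (T u + S v) : ℂ) ≤
        a * vnA A u ^ 2 + 2 * c * vnA A u * vnA A v + b * vnA A v ^ 2 := by
      rw [map_add (A : H →L[ℂ] H), hre]; nlinarith [e1, e2, e3, e4]
    have hscalar := scalar_key hc0 (vnA_nonneg A u) (vnA_nonneg A v) hlam
    calc vnA A (T u + S v) ^ 2 = RCLike.re (inner ℂ (A (T u + S v)) (T u + S v) : ℂ) :=
          vnA_sq hA _
      _ ≤ a * vnA A u ^ 2 + 2 * c * vnA A u * vnA A v + b * vnA A v ^ 2 := hsum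
      _ ≤ lam * (vnA A u ^ 2 + vnA A v ^ 2) := hscalar
  -- quadratic form bound
  have h_quad : ∀ y : H, vnA A (T y) ^ 2 + vnA A (S y) ^ 2 ≤ lam * vnA A y ^ 2 := by
    intro y
    set g := vnA A (T y) ^ 2 + vnA A (S y) ^ 2 with hg
    have hg0 : 0 ≤ g := by positivity
    have h1 : g = RCLike.re (inner ℂ (A y) (T (T y) + S (S y)) : ℂ) := by
      rw [inner_add_right, map_add, hg, vnA_sq hA, vnA_sq hA, moveA hT' y (T y),
        moveA hS' y (S y)]
    have h2 : g ≤ vnA A y * vnA A (T (T y) + S (S y)) := by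
      rw [h1]; exact re_le_vnA hA _ _
    have h3 : vnA A (T (T y) + S (S y)) ^ 2 ≤ lam * g := hKL (T y) (S y)
    rcases eq_or_lt_of_le hg0 with h | h
    · rw [← h]; positivity
    · have h4a : g * g ≤ (vnA A y * vnA A (T (T y) + S (S y))) *
          (vnA A y * vnA A (T (T y) + S (S y))) := mul_self_le_mul_self hg0 h2
      have h4b : vnA A y ^ 2 * (vnA A (T (T y) + S (S y)) ^ 2) ≤
          vnA A y ^ 2 * (lam * g) := mul_le_mul_of_nonneg_left h3 (sq_nonneg _)
      have h5 : g * g ≤ (lam * vnA A y ^ 2) * g := by nlinarith [h4a, h4b]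
      exact le_of_mul_le_mul_right h5 h
  set R := T ^ (2:ℕ) + S ^ (2:ℕ) with hR
  have hRapp : ∀ z : H, R z = T (T z) + S (S z) := fun z => by
    rw [hR, ContinuousLinearMap.add_apply, htapp, hsapp]
  -- positivity of A ∘ R
  have hRsa : A * R = star R * A := by
    rw [hR, mul_add, hT2sa, hS2sa, star_add, add_mul]
  have hP : (A * R).IsPositive := by
    rw [isPositive_def']
    constructor
    · show star (A * R) = A * R
      calc star (A * R) = star R * star A := star_mul _ _
        _ = star R * A := by rw [hA.isSelfAdjoint.star_eq]
        _ = A * R := hRsa.symm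
    · intro u
      show 0 ≤ RCLike.re (inner ℂ ((A * R) u) u : ℂ)
      have h1 : (inner ℂ ((A * R) u) u : ℂ) =
          inner ℂ (A (T u)) (T u) + inner ℂ (A (S u)) (S u) := by
        rw [ContinuousLinearMap.mul_apply, hRapp, map_add, inner_add_left,
          moveA hT' (T u) u, moveA hS' (S u) u]
      rw [h1, map_add]
      exact add_nonneg (hA.re_inner_nonneg_left (T u)) (hA.re_inner_nonneg_left (S u))
  have hvnP : ∀ z : H, vnA (A * R) z ≤ Real.sqrt lam * vnA A z := by
    intro z
    have h1 : RCLike.re (inner ℂ ((A * R) z) z : ℂ) = vnA A (T z) ^ 2 + vnA A (S z) ^ 2 := by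
      rw [ContinuousLinearMap.mul_apply, hRapp, map_add, inner_add_left,
        moveA hT' (T z) z, moveA hS' (S z) z, map_add, vnA_sq hA, vnA_sq hA]
    have h2 : RCLike.re (inner ℂ ((A * R) z) z : ℂ) ≤ lam * vnA A z ^ 2 := by
      rw [h1]; exact h_quad z
    calc vnA (A * R) z = Real.sqrt (RCLike.re (inner ℂ ((A * R) z) z : ℂ)) := rfl
      _ ≤ Real.sqrt (lam * vnA A z ^ 2) := Real.sqrt_le_sqrt h2
      _ = Real.sqrt lam * vnA A z := by
          rw [Real.sqrt_mul hlam0, Real.sqrt_sq (vnA_nonneg A z)]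
  -- final pointwise bound
  have hfin : ∀ x : H, vnA A x = 1 → vnA A (R x) ≤ lam := by
    intro x hx
    set r := vnA A (R x) with hr
    have hr0 : 0 ≤ r := vnA_nonneg A _
    have h1 : r ^ 2 = RCLike.re (inner ℂ ((A * R) x) (R x) : ℂ) := by
      rw [hr, ContinuousLinearMap.mul_apply]; exact vnA_sq hA _
    have h2 : RCLike.re (inner ℂ ((A * R) x) (R x) : ℂ) ≤
        vnA (A * R) x * vnA (A * R) (R x) := re_le_vnA hP x (R x)
    have h3 : vnA (A * R) x ≤ Real.sqrt lam := by simpa [hx] using hvnP x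
    have h4 : vnA (A * R) (R x) ≤ Real.sqrt lam * r := hvnP (R x)
    have h5 : r ^ 2 ≤ lam * r := by
      calc r ^ 2 ≤ vnA (A * R) x * vnA (A * R) (R x) := by rw [h1]; exact h2
        _ ≤ Real.sqrt lam * (Real.sqrt lam * r) :=
            mul_le_mul h3 h4 (vnA_nonneg _ _) (Real.sqrt_nonneg _)
        _ = lam * r := by rw [← mul_assoc, Real.mul_self_sqrt hlam0]
    rcases eq_or_lt_of_le hr0 with h | h
    · rw [← h]; exact hlam0
    · nlinarith [h5, h]
  refine Real.sSup_le ?_ hlam0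
  rintro y ⟨w, hw, rfl⟩
  exact hfin w hw
end

section
/- Let T be a bounded linear operator on H admitting a reduced A-adjoint T^♯. Then (1/4)·‖T^♯T + TT^♯‖_A ≤ (1/2)·∫₀¹ ‖λ·Re_A(T)² + (1−λ)·(Re_A(T)² + Im_A(T)²)/2‖_A dλ + (1/2)·∫₀¹ ‖λ·Im_A(T)² + (1−λ)·(Re_A(T)² + Im_A(T)²)/2‖_A dλ ≤ ω_A(T)². -/
set_option linter.unusedSectionVars false
set_option linter.unnecessarySimpa false
set_option maxHeartbeats 1000000

open ContinuousLinearMap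

variable {H : Type*} [NormedAddCommGroup H] [InnerProductSpace ℂ H] [CompleteSpace H]

section aux
variable {A B : H →L[ℂ] H}

lemma keyMbound (hB : ∀ x y : H, (inner ℂ (A x) y : ℂ) = inner ℂ (B x) (B y))
    (M : H →L[ℂ] H) (hM : A * M = adjoint M * A) (x : H) :
    RCLike.re (inner ℂ (A (M x)) x : ℂ) ≤ ‖M‖ * ‖B x‖ ^ 2 := by
  have hMk : ∀ k : ℕ, A * M ^ k = (adjoint M) ^ k * A := by
    intro k; induction k with
    | zero => simp
    | succ n ih =>
      rw [pow_succ, pow_succ, ← mul_assoc, ih, mul_assoc, hM, ← mul_assoc]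
  set t := ‖B x‖ ^ 2 with ht_def
  have ht : 0 ≤ t := sq_nonneg _
  set a : ℕ → ℝ := fun n => RCLike.re (inner ℂ (A ((M ^ (2^n)) x)) x : ℂ) with ha_def
  have hgoal : RCLike.re (inner ℂ (A (M x)) x : ℂ) = a 0 := by simp [ha_def]
  rw [hgoal]
  have happ : ∀ k : ℕ, ∀ u : H, A ((M ^ k) u) = ((adjoint M) ^ k) (A u) := by
    intro k u
    have := congrFun (congrArg (⇑) (hMk k)) u
    simpa [ContinuousLinearMap.mul_apply] using this
  have hsq : ∀ n, a (n+1) = ‖B ((M ^ (2^n)) x)‖ ^ 2 := by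
    intro n
    have h2 : (M ^ (2^(n+1))) x = (M ^ (2^n)) ((M ^ (2^n)) x) := by
      have h21 : (2:ℕ)^(n+1) = 2^n + 2^n := by
        rw [pow_succ]; omega
      rw [h21, pow_add, ContinuousLinearMap.mul_apply]
    have hadj : (adjoint M) ^ (2^n) = adjoint (M ^ (2^n)) := by
      rw [← star_eq_adjoint, ← star_eq_adjoint, ← star_pow]
    calc a (n+1) = RCLike.re (inner ℂ (A ((M ^ (2^n)) ((M ^ (2^n)) x))) x : ℂ) := by
          rw [ha_def]; simp only []; rw [h2]
      _ = RCLike.re (inner ℂ ((adjoint (M ^ (2^n))) (A ((M ^ (2^n)) x))) x : ℂ) := by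
          rw [happ, hadj]
      _ = RCLike.re (inner ℂ (A ((M ^ (2^n)) x)) ((M ^ (2^n)) x) : ℂ) := by
          rw [adjoint_inner_left]
      _ = RCLike.re (inner ℂ (B ((M ^ (2^n)) x)) (B ((M ^ (2^n)) x)) : ℂ) := by rw [hB]
      _ = ‖B ((M ^ (2^n)) x)‖ ^ 2 := by
          rw [inner_self_eq_norm_sq]
  have hcs : ∀ n, a n ≤ ‖B ((M ^ (2^n)) x)‖ * ‖B x‖ := by
    intro n
    calc a n = RCLike.re (inner ℂ (B ((M ^ (2^n)) x)) (B x) : ℂ) := by rw [ha_def]; simp only [hB]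
      _ ≤ ‖(inner ℂ (B ((M ^ (2^n)) x)) (B x) : ℂ)‖ := RCLike.re_le_norm _
      _ ≤ ‖B ((M ^ (2^n)) x)‖ * ‖B x‖ := norm_inner_le_norm _ _
  have hposa : ∀ n, 0 ≤ a (n+1) := fun n => (hsq n) ▸ sq_nonneg _
  by_cases ha0 : 0 ≤ a 0
  swap
  · exact le_trans (le_of_not_ge ha0) (mul_nonneg (norm_nonneg M) ht)
  have hallpos : ∀ n, 0 ≤ a n := fun n => Nat.casesOn n ha0 hposa
  have hstep : ∀ n, a n ^ 2 ≤ a (n+1) * t := by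
    intro n
    calc a n ^ 2 ≤ (‖B ((M ^ (2^n)) x)‖ * ‖B x‖) ^ 2 :=
          pow_le_pow_left₀ (hallpos n) (hcs n) 2
      _ = ‖B ((M ^ (2^n)) x)‖ ^ 2 * ‖B x‖ ^ 2 := mul_pow _ _ _
      _ = a (n+1) * t := by rw [hsq]
  have hiter : ∀ n, a 0 ^ (2^n) ≤ a n * t ^ (2^n - 1) := by
    intro n; induction n with
    | zero => simpa using le_refl (a 0)
    | succ n ih =>
      have h1 : (1:ℕ) ≤ 2^n := Nat.one_le_two_pow
      have e1 : (2:ℕ)^(n+1) = 2^n * 2 := pow_succ 2 n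
      calc a 0 ^ 2^(n+1) = (a 0 ^ 2^n)^2 := by rw [← pow_mul, e1]
        _ ≤ (a n * t ^ (2^n-1))^2 := pow_le_pow_left₀ (pow_nonneg ha0 _) ih 2
        _ = a n ^ 2 * (t^(2^n-1))^2 := mul_pow _ _ _
        _ ≤ (a (n+1) * t) * (t^(2^n-1))^2 :=
            mul_le_mul_of_nonneg_right (hstep n) (pow_nonneg (pow_nonneg ht _) 2)
        _ = a (n+1) * t ^ (2^(n+1) - 1) := by
            rw [← pow_mul, mul_assoc, ← pow_succ']
            congr 2
            omega
  have hup : ∀ n, a n ≤ ‖A‖ * ‖M‖ ^ (2^n) * ‖x‖^2 := by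
    intro n
    calc a n ≤ ‖(inner ℂ (A ((M ^ (2^n)) x)) x : ℂ)‖ := RCLike.re_le_norm _
      _ ≤ ‖A ((M ^ (2^n)) x)‖ * ‖x‖ := norm_inner_le_norm _ _
      _ ≤ (‖A‖ * ‖(M ^ (2^n)) x‖) * ‖x‖ :=
          mul_le_mul_of_nonneg_right (le_opNorm A _) (norm_nonneg x)
      _ ≤ (‖A‖ * (‖M ^ (2^n)‖ * ‖x‖)) * ‖x‖ := by
          gcongr
          exact le_opNorm _ _
      _ ≤ (‖A‖ * (‖M‖^(2^n) * ‖x‖)) * ‖x‖ := by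
          gcongr
          exact norm_pow_le' M (Nat.pos_of_ne_zero (by positivity))
      _ = ‖A‖ * ‖M‖ ^ (2^n) * ‖x‖^2 := by ring
  by_cases htz : t = 0
  · have hbx : ‖B x‖ = 0 := by
      have := htz; rw [ht_def] at this; exact pow_eq_zero_iff (two_ne_zero) |>.mp this
    have := hcs 0
    rw [hbx, mul_zero] at this
    calc a 0 ≤ 0 := this
      _ ≤ ‖M‖ * t := by rw [htz, mul_zero]
  by_cases hMz : ‖M‖ = 0
  · have hM0 : M = 0 := norm_eq_zero.mp hMz
    have : a 0 = 0 := by simp [ha_def, hM0]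
    rw [this]
    positivity
  have ht' : 0 < t := lt_of_le_of_ne ht (Ne.symm htz)
  have hMpos : 0 < ‖M‖ := lt_of_le_of_ne (norm_nonneg M) (Ne.symm hMz)
  set c := ‖M‖ * t with hc_def
  have hc : 0 < c := mul_pos hMpos ht'
  by_contra hcon
  push_neg at hcon
  have hr : 1 < a 0 / c := (one_lt_div hc).mpr hcon
  set K := ‖A‖ * ‖x‖^2 / t with hK_def
  have hKn : ∀ n, (a 0 / c)^(2^n) ≤ K := by
    intro n
    have h1 : (1:ℕ) ≤ 2^n := Nat.one_le_two_pow
    have e : t ^ ((2:ℕ)^n - 1) = t ^ ((2:ℕ)^n) / t := by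
      rw [eq_div_iff htz, ← pow_succ]
      congr 1
      omega
    have hbound : a 0 ^ (2^n) ≤ K * c^(2^n) := by
      calc a 0 ^ (2^n) ≤ a n * t ^ (2^n - 1) := hiter n
        _ ≤ (‖A‖ * ‖M‖ ^ (2^n) * ‖x‖^2) * t ^ (2^n - 1) :=
            mul_le_mul_of_nonneg_right (hup n) (pow_nonneg ht _)
        _ = K * c^(2^n) := by
            rw [e, hK_def, hc_def, mul_pow]
            field_simp
    rw [div_pow]
    rw [div_le_iff₀ (pow_pos hc _)]
    exact hbound
  obtain ⟨n, hn⟩ := pow_unbounded_of_one_lt K hr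
  have h2n : (a 0 / c)^n ≤ (a 0 / c)^(2^n) :=
    pow_le_pow_right₀ hr.le (Nat.le_of_lt Nat.lt_two_pow_self)
  exact absurd (le_trans h2n (hKn n)) (not_le.mpr hn)

lemma vnA_eq (hB : ∀ x y : H, (inner ℂ (A x) y : ℂ) = inner ℂ (B x) (B y)) (x : H) :
    vnA A x = ‖B x‖ := by
  unfold vnA
  rw [hB, inner_self_eq_norm_sq]
  exact Real.sqrt_sq (norm_nonneg _)

lemma vnA_apply_le (hB : ∀ x y : H, (inner ℂ (A x) y : ℂ) = inner ℂ (B x) (B y))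
    (hadj : adjoint A = A) {X S : H →L[ℂ] H} (hS : A * S = adjoint X * A) (x : H) :
    ‖B (X x)‖ ≤ Real.sqrt ‖S * X‖ * ‖B x‖ := by
  have hAX : adjoint S * A = A * X := by
    have h := congrArg star hS
    simpa [star_mul, star_eq_adjoint, adjoint_adjoint, hadj] using h
  have hM : A * (S * X) = adjoint (S * X) * A := by
    have hadjSX : adjoint (S * X) = adjoint X * adjoint S := by
      rw [← star_eq_adjoint, ← star_eq_adjoint, ← star_eq_adjoint, star_mul]
    rw [hadjSX, ← mul_assoc, hS, mul_assoc, ← hAX, ← mul_assoc]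
  have hkey := keyMbound hB (S * X) hM x
  have happ : A ((S * X) x) = (adjoint X) (A (X x)) := by
    have := congrFun (congrArg (⇑) hS) (X x)
    simpa [ContinuousLinearMap.mul_apply] using this
  have hval : RCLike.re (inner ℂ (A ((S * X) x)) x : ℂ) = ‖B (X x)‖ ^ 2 := by
    rw [happ, adjoint_inner_left, hB, inner_self_eq_norm_sq]
  rw [hval] at hkey
  have h1 : ‖B (X x)‖ = Real.sqrt (‖B (X x)‖ ^ 2) := (Real.sqrt_sq (norm_nonneg _)).symm
  rw [h1]
  calc Real.sqrt (‖B (X x)‖ ^ 2) ≤ Real.sqrt (‖S * X‖ * ‖B x‖ ^ 2) := Real.sqrt_le_sqrt hkey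
    _ = Real.sqrt ‖S * X‖ * ‖B x‖ := by
        rw [Real.sqrt_mul (norm_nonneg _), Real.sqrt_sq (norm_nonneg _)]

lemma unit_exists (hB : ∀ x y : H, (inner ℂ (A x) y : ℂ) = inner ℂ (B x) (B y))
    (hBB : ∀ x, A x = B (B x)) (hA0 : A ≠ 0) : ∃ x : H, vnA A x = 1 := by
  have hBne : B ≠ 0 := by
    intro h
    apply hA0
    ext x
    rw [hBB x, h]
    simp
  have : ∃ y, B y ≠ 0 := by
    by_contra h
    push_neg at h
    exact hBne (by ext y; simpa using h y)
  obtain ⟨y, hy⟩ := this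
  have hny : ‖B y‖ ≠ 0 := norm_ne_zero_iff.mpr hy
  refine ⟨((‖B y‖⁻¹ : ℝ) : ℂ) • y, ?_⟩
  rw [vnA_eq hB, map_smul, norm_smul]
  simp [abs_of_nonneg (inv_nonneg.mpr (norm_nonneg _)), inv_mul_cancel₀ hny]

lemma opnA_le (hne : ∃ x : H, vnA A x = 1) {X : H →L[ℂ] H} {C : ℝ}
    (h : ∀ x, vnA A x = 1 → vnA A (X x) ≤ C) : opnA A X ≤ C := by
  obtain ⟨x0, hx0⟩ := hne
  refine csSup_le ⟨vnA A (X x0), ⟨x0, hx0, rfl⟩⟩ ?_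
  rintro _ ⟨x, hx, rfl⟩
  exact h x hx

lemma opnA_bdd (hB : ∀ x y : H, (inner ℂ (A x) y : ℂ) = inner ℂ (B x) (B y))
    (hadj : adjoint A = A) {X S : H →L[ℂ] H} (hS : A * S = adjoint X * A) :
    BddAbove ((fun x => vnA A (X x)) '' {x : H | vnA A x = 1}) := by
  refine ⟨Real.sqrt ‖S * X‖, ?_⟩
  rintro _ ⟨x, hx, rfl⟩
  show vnA A (X x) ≤ _
  rw [Set.mem_setOf_eq, vnA_eq hB] at hx
  rw [vnA_eq hB]
  simpa [hx] using vnA_apply_le hB hadj hS x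

lemma le_opnA {X : H →L[ℂ] H}
    (hbdd : BddAbove ((fun x => vnA A (X x)) '' {x : H | vnA A x = 1}))
    {x : H} (hx : vnA A x = 1) : vnA A (X x) ≤ opnA A X :=
  le_csSup hbdd ⟨x, hx, rfl⟩

lemma opnA_nonneg_s4 (hne : ∃ x : H, vnA A x = 1) {X : H →L[ℂ] H}
    (hbdd : BddAbove ((fun x => vnA A (X x)) '' {x : H | vnA A x = 1})) :
    0 ≤ opnA A X := by
  obtain ⟨x0, hx0⟩ := hne
  exact le_trans (Real.sqrt_nonneg _) (le_opnA hbdd hx0)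

lemma vnA_le_opnA_mul (hB : ∀ x y : H, (inner ℂ (A x) y : ℂ) = inner ℂ (B x) (B y))
    (hadj : adjoint A = A) {X S : H →L[ℂ] H} (hS : A * S = adjoint X * A) (x : H) :
    ‖B (X x)‖ ≤ opnA A X * ‖B x‖ := by
  by_cases hx : ‖B x‖ = 0
  · have := vnA_apply_le hB hadj hS x
    rw [hx, mul_zero] at this
    rw [hx, mul_zero]
    exact this
  · set c : ℂ := ((‖B x‖⁻¹ : ℝ) : ℂ) with hc
    have hu : vnA A (c • x) = 1 := by
      rw [vnA_eq hB, map_smul, norm_smul, hc]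
      simp [abs_of_nonneg (inv_nonneg.mpr (norm_nonneg _)), inv_mul_cancel₀ hx]
    have h1 := le_opnA (opnA_bdd hB hadj hS) hu
    rw [vnA_eq hB, map_smul, map_smul, norm_smul, hc] at h1
    simp only [Complex.norm_real, Real.norm_eq_abs,
      abs_of_nonneg (inv_nonneg.mpr (norm_nonneg (B x)))] at h1
    calc ‖B (X x)‖ = (‖B x‖⁻¹ * ‖B (X x)‖) * ‖B x‖ := by field_simp
      _ ≤ opnA A X * ‖B x‖ :=
        mul_le_mul_of_nonneg_right h1 (norm_nonneg _)

lemma opnA_add_le (hB : ∀ x y : H, (inner ℂ (A x) y : ℂ) = inner ℂ (B x) (B y))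
    (hadj : adjoint A = A) (hne : ∃ x : H, vnA A x = 1)
    {X SX Y SY : H →L[ℂ] H} (hSX : A * SX = adjoint X * A) (hSY : A * SY = adjoint Y * A) :
    opnA A (X + Y) ≤ opnA A X + opnA A Y := by
  apply opnA_le hne
  intro x hx
  rw [vnA_eq hB] at hx ⊢
  have h1 := le_opnA (opnA_bdd hB hadj hSX) (by rw [vnA_eq hB]; exact hx)
  have h2 := le_opnA (opnA_bdd hB hadj hSY) (by rw [vnA_eq hB]; exact hx)
  rw [vnA_eq hB] at h1 h2
  calc ‖B ((X + Y) x)‖ = ‖B (X x) + B (Y x)‖ := by simp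
    _ ≤ ‖B (X x)‖ + ‖B (Y x)‖ := norm_add_le _ _
    _ ≤ opnA A X + opnA A Y := add_le_add h1 h2

lemma opnA_smul_le (hB : ∀ x y : H, (inner ℂ (A x) y : ℂ) = inner ℂ (B x) (B y))
    (hadj : adjoint A = A) (hne : ∃ x : H, vnA A x = 1)
    {X SX : H →L[ℂ] H} (hSX : A * SX = adjoint X * A) (c : ℂ) :
    opnA A (c • X) ≤ ‖c‖ * opnA A X := by
  apply opnA_le hne
  intro x hx
  rw [vnA_eq hB] at hx ⊢
  have h1 := le_opnA (opnA_bdd hB hadj hSX) (by rw [vnA_eq hB]; exact hx)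
  rw [vnA_eq hB] at h1
  calc ‖B ((c • X) x)‖ = ‖c‖ * ‖B (X x)‖ := by
        simp [norm_smul]
    _ ≤ ‖c‖ * opnA A X := mul_le_mul_of_nonneg_left h1 (norm_nonneg c)

lemma sa_add {X Y : H →L[ℂ] H} (hX : A * X = adjoint X * A) (hY : A * Y = adjoint Y * A) :
    A * (X + Y) = adjoint (X + Y) * A := by
  have h : adjoint (X + Y) = adjoint X + adjoint Y := by
    rw [← star_eq_adjoint, ← star_eq_adjoint, ← star_eq_adjoint, star_add]
  rw [h, mul_add, hX, hY, add_mul]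

lemma sa_sub {X Y : H →L[ℂ] H} (hX : A * X = adjoint X * A) (hY : A * Y = adjoint Y * A) :
    A * (X - Y) = adjoint (X - Y) * A := by
  have h : adjoint (X - Y) = adjoint X - adjoint Y := by
    rw [← star_eq_adjoint, ← star_eq_adjoint, ← star_eq_adjoint, star_sub]
  rw [h, mul_sub, hX, hY, sub_mul]

lemma sa_smul_real (r : ℝ) {X : H →L[ℂ] H} (hX : A * X = adjoint X * A) :
    A * ((r : ℂ) • X) = adjoint ((r : ℂ) • X) * A := by
  have h : adjoint ((r : ℂ) • X) = (r : ℂ) • adjoint X := by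
    rw [← star_eq_adjoint, ← star_eq_adjoint, star_smul, Complex.star_def, Complex.conj_ofReal]
  rw [h, mul_smul_comm, hX, smul_mul_assoc]

lemma sa_sq {X : H →L[ℂ] H} (hX : A * X = adjoint X * A) :
    A * (X ^ 2) = adjoint (X ^ 2) * A := by
  have h : adjoint (X ^ 2) = adjoint X * adjoint X := by
    rw [← star_eq_adjoint, ← star_eq_adjoint, pow_two, star_mul]
  rw [h, pow_two, ← mul_assoc, hX, mul_assoc, hX, ← mul_assoc]

lemma opnA_le_of_sa (hB : ∀ x y : H, (inner ℂ (A x) y : ℂ) = inner ℂ (B x) (B y))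
    (hne : ∃ x : H, vnA A x = 1) {R : H →L[ℂ] H}
    (hR : A * R = adjoint R * A) {w : ℝ} (hw : 0 ≤ w)
    (hpt : ∀ x : H, vnA A x = 1 → ‖(inner ℂ (A (R x)) x : ℂ)‖ ≤ w) :
    opnA A R ≤ w := by
  have symm : ∀ u v : H, (inner ℂ (A (R u)) v : ℂ) = inner ℂ (B u) (B (R v)) := by
    intro u v
    have h1 : A (R u) = (adjoint R) (A u) := by
      have := congrFun (congrArg (⇑) hR) u
      simpa [ContinuousLinearMap.mul_apply] using this
    rw [h1, adjoint_inner_left, hB]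
  have claim1 : ∀ u : H, ‖(inner ℂ (A (R u)) u : ℂ)‖ ≤ w * ‖B u‖ ^ 2 := by
    intro u
    by_cases hu : ‖B u‖ = 0
    · have : ‖(inner ℂ (A (R u)) u : ℂ)‖ ≤ ‖B u‖ * ‖B (R u)‖ := by
        rw [symm]
        exact norm_inner_le_norm _ _
      rw [hu, zero_mul] at this
      rw [hu]
      simpa using le_trans this (le_refl _)
    · set c : ℂ := ((‖B u‖⁻¹ : ℝ) : ℂ) with hc
      have hv : vnA A (c • u) = 1 := by
        rw [vnA_eq hB, map_smul, norm_smul, hc]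
        simp [abs_of_nonneg (inv_nonneg.mpr (norm_nonneg _)), inv_mul_cancel₀ hu]
      have h2 := hpt (c • u) hv
      have h3 : (inner ℂ (A (R (c • u))) (c • u) : ℂ)
          = (starRingEnd ℂ) c * (c * inner ℂ (A (R u)) u) := by
        rw [map_smul, map_smul, inner_smul_left, inner_smul_right]
      rw [h3] at h2
      have h4 : ‖(starRingEnd ℂ) c * (c * (inner ℂ (A (R u)) u : ℂ))‖
          = ‖B u‖⁻¹ * (‖B u‖⁻¹ * ‖(inner ℂ (A (R u)) u : ℂ)‖) := by
        rw [norm_mul, norm_mul, RCLike.norm_conj, hc]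
        simp [abs_of_nonneg (inv_nonneg.mpr (norm_nonneg (B u)))]
      rw [h4] at h2
      have hinv : ‖B u‖⁻¹ * ‖B u‖ = 1 := inv_mul_cancel₀ hu
      have hkey := mul_le_mul_of_nonneg_right h2 (sq_nonneg ‖B u‖)
      have hid : ‖B u‖⁻¹ * (‖B u‖⁻¹ * ‖(inner ℂ (A (R u)) u : ℂ)‖) * ‖B u‖ ^ 2
          = (‖B u‖⁻¹ * ‖B u‖) * ((‖B u‖⁻¹ * ‖B u‖) * ‖(inner ℂ (A (R u)) u : ℂ)‖) := by
        ring
      rw [hid, hinv, one_mul, one_mul] at hkey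
      exact hkey
  have polar : ∀ x y : H,
      RCLike.re (inner ℂ (A (R (x+y))) (x+y) : ℂ) - RCLike.re (inner ℂ (A (R (x-y))) (x-y) : ℂ)
        = 4 * RCLike.re (inner ℂ (A (R x)) y : ℂ) := by
    intro x y
    have e1 : (inner ℂ (A (R (x+y))) (x+y) : ℂ)
        = inner ℂ (A (R x)) x + inner ℂ (A (R x)) y + inner ℂ (A (R y)) x + inner ℂ (A (R y)) y := by
      simp [map_add, inner_add_left, inner_add_right]
      ring
    have e2 : (inner ℂ (A (R (x-y))) (x-y) : ℂ)
        = inner ℂ (A (R x)) x - inner ℂ (A (R x)) y - inner ℂ (A (R y)) x + inner ℂ (A (R y)) y := by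
      simp [map_sub, inner_sub_left, inner_sub_right]
      ring
    have e3 : (inner ℂ (A (R y)) x : ℂ) = (starRingEnd ℂ) (inner ℂ (A (R x)) y : ℂ) := by
      rw [symm y x, hB (R x) y, inner_conj_symm]
    rw [e1, e2, e3]
    simp only [RCLike.re_to_complex, Complex.add_re, Complex.sub_re, Complex.conj_re]
    ring
  apply opnA_le hne
  intro x hx
  rw [vnA_eq hB] at hx ⊢
  by_cases hz : ‖B (R x)‖ = 0
  · rw [hz]; exact hw
  · set c : ℂ := ((‖B (R x)‖⁻¹ : ℝ) : ℂ) with hc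
    set y := c • R x with hy
    have hby : ‖B y‖ = 1 := by
      rw [hy, map_smul, norm_smul, hc]
      simp [abs_of_nonneg (inv_nonneg.mpr (norm_nonneg _)), inv_mul_cancel₀ hz]
    have hre : RCLike.re (inner ℂ (A (R x)) y : ℂ) = ‖B (R x)‖ := by
      rw [hy, inner_smul_right, hc]
      simp only [RCLike.re_to_complex, Complex.re_ofReal_mul]
      have h5 : (inner ℂ (A (R x)) (R x) : ℂ).re = ‖B (R x)‖ ^ 2 := by
        rw [hB]
        simpa using inner_self_eq_norm_sq (𝕜 := ℂ) (B (R x))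
      rw [h5, pow_two, ← mul_assoc, inv_mul_cancel₀ hz, one_mul]
    have h1 : RCLike.re (inner ℂ (A (R (x+y))) (x+y) : ℂ) ≤ w * ‖B x + B y‖^2 := by
      calc RCLike.re (inner ℂ (A (R (x+y))) (x+y) : ℂ)
          ≤ ‖(inner ℂ (A (R (x+y))) (x+y) : ℂ)‖ := RCLike.re_le_norm _
        _ ≤ w * ‖B (x+y)‖^2 := claim1 _
        _ = w * ‖B x + B y‖^2 := by rw [map_add]
    have h2 : -RCLike.re (inner ℂ (A (R (x-y))) (x-y) : ℂ) ≤ w * ‖B x - B y‖^2 := by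
      have hcl := claim1 (x - y)
      have hb : ‖B (x-y)‖ = ‖B x - B y‖ := by rw [map_sub]
      rw [hb] at hcl
      refine le_trans ?_ hcl
      rw [← norm_neg]
      simpa using RCLike.re_le_norm (-(inner ℂ (A (R (x-y))) (x-y) : ℂ))
    have hpar : ‖B x + B y‖^2 + ‖B x - B y‖^2 = 2 * (‖B x‖^2 + ‖B y‖^2) := by
      have := parallelogram_law_with_norm ℂ (B x) (B y)
      nlinarith [this]
    have h4 := polar x y
    have : 4 * ‖B (R x)‖ ≤ w * 4 := by
      rw [← hre]
      calc 4 * RCLike.re (inner ℂ (A (R x)) y : ℂ)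
          = RCLike.re (inner ℂ (A (R (x+y))) (x+y) : ℂ)
            - RCLike.re (inner ℂ (A (R (x-y))) (x-y) : ℂ) := h4.symm
        _ ≤ w * ‖B x + B y‖^2 + w * ‖B x - B y‖^2 := by linarith
        _ = w * (‖B x + B y‖^2 + ‖B x - B y‖^2) := by ring
        _ = w * (2 * (‖B x‖^2 + ‖B y‖^2)) := by rw [hpar]
        _ = w * 4 := by rw [hx, hby]; ring
    linarith

end aux

section aux2
variable {A B : H →L[ℂ] H}

lemma ptF (hB : ∀ x y : H, (inner ℂ (A x) y : ℂ) = inner ℂ (B x) (B y))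
    (hadj : adjoint A = A) (hne : ∃ x : H, vnA A x = 1)
    {P G : H →L[ℂ] H} (saP : A * P = adjoint P * A) (saG : A * G = adjoint G * A)
    {c : ℝ} (hP : opnA A P ≤ c) (hGc : opnA A G ≤ c) :
    ∀ l ∈ Set.Icc (0:ℝ) 1, opnA A ((l:ℂ) • P + ((1:ℂ)-(l:ℂ)) • G) ≤ c := by
  intro l hl
  obtain ⟨hl0, hl1⟩ := hl
  have h1l : ((1:ℂ) - (l:ℂ)) = (((1 - l : ℝ)):ℂ) := by push_cast; ring
  have saPl : A * ((l:ℂ) • P) = adjoint ((l:ℂ) • P) * A := sa_smul_real l saP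
  have saGl : A * (((1-l:ℝ):ℂ) • G) = adjoint (((1-l:ℝ):ℂ) • G) * A := sa_smul_real _ saG
  calc opnA A ((l:ℂ) • P + ((1:ℂ)-(l:ℂ)) • G)
      = opnA A ((l:ℂ) • P + ((1-l:ℝ):ℂ) • G) := by rw [h1l]
    _ ≤ opnA A ((l:ℂ) • P) + opnA A (((1-l:ℝ):ℂ) • G) :=
        opnA_add_le hB hadj hne saPl saGl
    _ ≤ ‖(l:ℂ)‖ * opnA A P + ‖((1-l:ℝ):ℂ)‖ * opnA A G :=
        add_le_add (opnA_smul_le hB hadj hne saP _) (opnA_smul_le hB hadj hne saG _)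
    _ = l * opnA A P + (1-l) * opnA A G := by
        rw [Complex.norm_real, Complex.norm_real, Real.norm_eq_abs, Real.norm_eq_abs,
          abs_of_nonneg hl0, abs_of_nonneg (by linarith : (0:ℝ) ≤ 1 - l)]
    _ ≤ l * c + (1-l) * c :=
        add_le_add (mul_le_mul_of_nonneg_left hP hl0)
          (mul_le_mul_of_nonneg_left hGc (by linarith))
    _ = c := by ring

lemma contF (hB : ∀ x y : H, (inner ℂ (A x) y : ℂ) = inner ℂ (B x) (B y))
    (hadj : adjoint A = A) (hne : ∃ x : H, vnA A x = 1)
    {P G : H →L[ℂ] H} (saP : A * P = adjoint P * A) (saG : A * G = adjoint G * A) :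
    Continuous (fun l : ℝ => opnA A ((l:ℂ) • P + ((1:ℂ)-(l:ℂ)) • G)) := by
  have saD : A * (P - G) = adjoint (P - G) * A := sa_sub saP saG
  set C := opnA A (P - G) with hC_def
  have hC0 : 0 ≤ C := opnA_nonneg_s4 hne (opnA_bdd hB hadj saD)
  have saF : ∀ l : ℝ, A * ((l:ℂ) • P + ((1:ℂ)-(l:ℂ)) • G)
      = adjoint ((l:ℂ) • P + ((1:ℂ)-(l:ℂ)) • G) * A := by
    intro l
    have h1l : ((1:ℂ) - (l:ℂ)) = (((1 - l : ℝ)):ℂ) := by push_cast; ring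
    rw [h1l]
    exact sa_add (sa_smul_real l saP) (sa_smul_real _ saG)
  have hlip : ∀ l l' : ℝ, opnA A ((l:ℂ) • P + ((1:ℂ)-(l:ℂ)) • G)
      ≤ opnA A (((l':ℂ)) • P + ((1:ℂ)-(l':ℂ)) • G) + C * |l - l'| := by
    intro l l'
    have hdiff : (l:ℂ) • P + ((1:ℂ)-(l:ℂ)) • G
        = ((l':ℂ) • P + ((1:ℂ)-(l':ℂ)) • G) + (((l - l' : ℝ)):ℂ) • (P - G) := by
      push_cast
      module
    rw [hdiff]
    calc opnA A (((l':ℂ) • P + ((1:ℂ)-(l':ℂ)) • G) + (((l - l' : ℝ)):ℂ) • (P - G))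
        ≤ opnA A ((l':ℂ) • P + ((1:ℂ)-(l':ℂ)) • G)
          + opnA A ((((l - l' : ℝ)):ℂ) • (P - G)) :=
          opnA_add_le hB hadj hne (saF l') (sa_smul_real _ saD)
      _ ≤ opnA A ((l':ℂ) • P + ((1:ℂ)-(l':ℂ)) • G) + ‖(((l - l' : ℝ)):ℂ)‖ * C :=
          add_le_add le_rfl (opnA_smul_le hB hadj hne saD _)
      _ = opnA A ((l':ℂ) • P + ((1:ℂ)-(l':ℂ)) • G) + C * |l - l'| := by
          rw [Complex.norm_real, Real.norm_eq_abs, mul_comm]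
  have hlw : LipschitzWith (Real.toNNReal C) (fun l : ℝ => opnA A ((l:ℂ) • P + ((1:ℂ)-(l:ℂ)) • G)) := by
    apply LipschitzWith.of_dist_le_mul
    intro l l'
    rw [Real.dist_eq, Real.dist_eq, Real.coe_toNNReal C hC0]
    rw [abs_sub_le_iff]
    constructor
    · have := hlip l l'
      linarith [this]
    · have := hlip l' l
      rw [abs_sub_comm l' l] at this
      linarith [this]
  exact hlw.continuous

end aux2

theorem stmt4 (A T Ts : H →L[ℂ] H) (hA : A.IsPositive) (hA0 : A ≠ 0)
    (hTs : IsReducedAdjA A T Ts) :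
    (1/4) * opnA A (Ts ∘L T + T ∘L Ts) ≤ (1/2) * (∫ l in (0:ℝ)..1, opnA A ((l:ℂ) • (ReA T Ts) ^ (2:ℕ) + ((1:ℂ) - (l:ℂ)) • ((2:ℂ)⁻¹ • ((ReA T Ts) ^ (2:ℕ) + (ImA T Ts) ^ (2:ℕ))))) + (1/2) * (∫ l in (0:ℝ)..1, opnA A ((l:ℂ) • (ImA T Ts) ^ (2:ℕ) + ((1:ℂ) - (l:ℂ)) • ((2:ℂ)⁻¹ • ((ReA T Ts) ^ (2:ℕ) + (ImA T Ts) ^ (2:ℕ))))) ∧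
    (1/2) * (∫ l in (0:ℝ)..1, opnA A ((l:ℂ) • (ReA T Ts) ^ (2:ℕ) + ((1:ℂ) - (l:ℂ)) • ((2:ℂ)⁻¹ • ((ReA T Ts) ^ (2:ℕ) + (ImA T Ts) ^ (2:ℕ))))) + (1/2) * (∫ l in (0:ℝ)..1, opnA A ((l:ℂ) • (ImA T Ts) ^ (2:ℕ) + ((1:ℂ) - (l:ℂ)) • ((2:ℂ)⁻¹ • ((ReA T Ts) ^ (2:ℕ) + (ImA T Ts) ^ (2:ℕ))))) ≤ (wA A T)^2 := by
  classical
  -- square root of A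
  obtain ⟨B, hBpos, hBBc⟩ : ∃ B : H →L[ℂ] H, B.IsPositive ∧ B ∘L B = A := by
    refine ⟨CFC.sqrt A, (nonneg_iff_isPositive _).mp (CFC.sqrt_nonneg A), ?_⟩
    have h0 : (0:H →L[ℂ] H) ≤ A := (nonneg_iff_isPositive _).mpr hA
    have := CFC.sqrt_mul_sqrt_self A h0
    ext x; simpa [ContinuousLinearMap.mul_apply] using congrFun (congrArg (⇑) this) x
  have hBB : ∀ x, A x = B (B x) := by
    intro x
    have := congrFun (congrArg (⇑) hBBc) x
    simpa [comp_apply] using this.symm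
  have hBadj : adjoint B = B := isSelfAdjoint_iff'.mp hBpos.isSelfAdjoint
  have hB : ∀ x y : H, (inner ℂ (A x) y : ℂ) = inner ℂ (B x) (B y) := by
    intro x y
    calc (inner ℂ (A x) y : ℂ) = inner ℂ ((adjoint B) (B x)) y := by rw [hBB, hBadj]
      _ = inner ℂ (B x) (B y) := by rw [adjoint_inner_left]
  have hadj : adjoint A = A := isSelfAdjoint_iff'.mp hA.isSelfAdjoint
  have hne : ∃ x : H, vnA A x = 1 := unit_exists hB hBB hA0
  have hATs : A * Ts = adjoint T * A := hTs.1
  have hAT : A * T = adjoint Ts * A := by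
    have h := congrArg star hATs
    simp only [star_mul, star_eq_adjoint, adjoint_adjoint, hadj] at h
    exact h.symm
  set R := ReA T Ts with hRdef
  set Im := ImA T Ts with hImdef
  -- A-selfadjointness of R and Im
  have hadjR : adjoint R = (2:ℂ)⁻¹ • (adjoint T + adjoint Ts) := by
    rw [hRdef, ReA, ← star_eq_adjoint, star_smul, star_add, star_eq_adjoint, star_eq_adjoint]
    norm_num
  have hR : A * R = adjoint R * A := by
    rw [hadjR, hRdef, ReA, mul_smul_comm, smul_mul_assoc, mul_add, add_mul, hAT, hATs]
    rw [add_comm (adjoint Ts * A)]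
  have hadjIm : adjoint Im = (-(2*Complex.I)⁻¹) • (adjoint T - adjoint Ts) := by
    rw [hImdef, ImA, ← star_eq_adjoint, star_smul, star_sub, star_eq_adjoint, star_eq_adjoint]
    congr 1
    simp [Complex.star_def, map_inv₀, Complex.conj_I]
  have hIm : A * Im = adjoint Im * A := by
    rw [hadjIm, hImdef, ImA, mul_smul_comm, smul_mul_assoc, mul_sub, sub_mul, hAT, hATs]
    module
  -- squares
  have saR2 : A * (R^(2:ℕ)) = adjoint (R^(2:ℕ)) * A := sa_sq hR
  have saIm2 : A * (Im^(2:ℕ)) = adjoint (Im^(2:ℕ)) * A := sa_sq hIm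
  have saSum : A * (R^(2:ℕ) + Im^(2:ℕ)) = adjoint (R^(2:ℕ) + Im^(2:ℕ)) * A := sa_add saR2 saIm2
  set G := (2:ℂ)⁻¹ • (R^(2:ℕ) + Im^(2:ℕ)) with hGdef
  have saG : A * G = adjoint G * A := by
    rw [hGdef]
    have h2 : ((2:ℂ)⁻¹) = (((2⁻¹:ℝ)):ℂ) := by norm_num
    rw [h2]
    exact sa_smul_real _ saSum
  -- the numerical radius
  set w := wA A T with hwdef
  have hwbdd : BddAbove ((fun x => ‖(inner ℂ (A (T x)) x : ℂ)‖) '' {x : H | vnA A x = 1}) := by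
    refine ⟨Real.sqrt ‖Ts * T‖, ?_⟩
    rintro _ ⟨x, hx, rfl⟩
    show ‖(inner ℂ (A (T x)) x : ℂ)‖ ≤ _
    rw [Set.mem_setOf_eq, vnA_eq hB] at hx
    calc ‖(inner ℂ (A (T x)) x : ℂ)‖ = ‖(inner ℂ (B (T x)) (B x) : ℂ)‖ := by rw [hB]
      _ ≤ ‖B (T x)‖ * ‖B x‖ := norm_inner_le_norm _ _
      _ ≤ (Real.sqrt ‖Ts * T‖ * ‖B x‖) * ‖B x‖ :=
          mul_le_mul_of_nonneg_right (vnA_apply_le hB hadj hATs x) (norm_nonneg _)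
      _ = Real.sqrt ‖Ts * T‖ := by rw [hx]; ring
  have hlew : ∀ x, vnA A x = 1 → ‖(inner ℂ (A (T x)) x : ℂ)‖ ≤ w :=
    fun x hx => le_csSup hwbdd ⟨x, hx, rfl⟩
  have hw0 : 0 ≤ w := by
    obtain ⟨x0, hx0⟩ := hne
    exact le_trans (norm_nonneg _) (hlew x0 hx0)
  -- conjugation relation
  have hconj : ∀ x : H, (inner ℂ (A (Ts x)) x : ℂ) = (starRingEnd ℂ) (inner ℂ (A (T x)) x : ℂ) := by
    intro x
    have h1 : A (Ts x) = (adjoint T) (A x) := by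
      have := congrFun (congrArg (⇑) hATs) x
      simpa [ContinuousLinearMap.mul_apply] using this
    rw [h1, adjoint_inner_left, hB x (T x), hB (T x) x, inner_conj_symm]
  -- pointwise numerical-radius bounds for R and Im
  have hptR : ∀ x, vnA A x = 1 → ‖(inner ℂ (A (R x)) x : ℂ)‖ ≤ w := by
    intro x hx
    have hz := hlew x hx
    have hRx : (inner ℂ (A (R x)) x : ℂ) = (starRingEnd ℂ) (2:ℂ)⁻¹
        * (inner ℂ (A (T x)) x + inner ℂ (A (Ts x)) x) := by
      rw [hRdef, ReA]
      simp only [coe_smul', Pi.smul_apply, add_apply, map_smul, map_add,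
        inner_smul_left, inner_add_left]
    rw [hRx, hconj x]
    set z := (inner ℂ (A (T x)) x : ℂ) with hzdef
    calc ‖(starRingEnd ℂ) (2:ℂ)⁻¹ * (z + (starRingEnd ℂ) z)‖
        = ‖(2:ℂ)⁻¹‖ * ‖z + (starRingEnd ℂ) z‖ := by rw [norm_mul, RCLike.norm_conj]
      _ ≤ 2⁻¹ * (‖z‖ + ‖z‖) := by
          have h6 : ‖(2:ℂ)⁻¹‖ = (2:ℝ)⁻¹ := by norm_num
          rw [h6]
          have := norm_add_le z ((starRingEnd ℂ) z)
          rw [RCLike.norm_conj] at this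
          exact mul_le_mul_of_nonneg_left this (by norm_num)
      _ = ‖z‖ := by ring
      _ ≤ w := hz
  have hptIm : ∀ x, vnA A x = 1 → ‖(inner ℂ (A (Im x)) x : ℂ)‖ ≤ w := by
    intro x hx
    have hz := hlew x hx
    have hImx : (inner ℂ (A (Im x)) x : ℂ) = (starRingEnd ℂ) (2*Complex.I)⁻¹
        * (inner ℂ (A (T x)) x - inner ℂ (A (Ts x)) x) := by
      rw [hImdef, ImA]
      simp only [coe_smul', Pi.smul_apply, sub_apply, map_smul, map_sub,
        inner_smul_left, inner_sub_left]
    rw [hImx, hconj x]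
    set z := (inner ℂ (A (T x)) x : ℂ) with hzdef
    calc ‖(starRingEnd ℂ) (2*Complex.I)⁻¹ * (z - (starRingEnd ℂ) z)‖
        = ‖(2*Complex.I)⁻¹‖ * ‖z - (starRingEnd ℂ) z‖ := by rw [norm_mul, RCLike.norm_conj]
      _ ≤ 2⁻¹ * (‖z‖ + ‖z‖) := by
          have h6 : ‖(2*Complex.I)⁻¹‖ = (2:ℝ)⁻¹ := by
            rw [norm_inv, norm_mul, Complex.norm_I]
            norm_num
          rw [h6]
          have := norm_sub_le z ((starRingEnd ℂ) z)
          rw [RCLike.norm_conj] at this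
          exact mul_le_mul_of_nonneg_left this (by norm_num)
      _ = ‖z‖ := by ring
      _ ≤ w := hz
  have hNR : opnA A R ≤ w := opnA_le_of_sa hB hne hR hw0 hptR
  have hNIm : opnA A Im ≤ w := opnA_le_of_sa hB hne hIm hw0 hptIm
  have hNR0 : 0 ≤ opnA A R := opnA_nonneg_s4 hne (opnA_bdd hB hadj hR)
  have hNIm0 : 0 ≤ opnA A Im := opnA_nonneg_s4 hne (opnA_bdd hB hadj hIm)
  -- norms of squares
  have hsqbound : ∀ (X : H →L[ℂ] H), A * X = adjoint X * A → opnA A X ≤ w → 0 ≤ opnA A X →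
      opnA A (X^(2:ℕ)) ≤ w^2 := by
    intro X hX hXw hX0
    apply opnA_le hne
    intro x hx
    rw [vnA_eq hB] at hx ⊢
    have e : (X^(2:ℕ)) x = X (X x) := by rw [pow_two, ContinuousLinearMap.mul_apply]
    rw [e]
    calc ‖B (X (X x))‖ ≤ opnA A X * ‖B (X x)‖ := vnA_le_opnA_mul hB hadj hX (X x)
      _ ≤ opnA A X * (opnA A X * ‖B x‖) :=
          mul_le_mul_of_nonneg_left (vnA_le_opnA_mul hB hadj hX x) hX0
      _ = opnA A X * opnA A X := by rw [hx]; ring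
      _ ≤ w * w := mul_le_mul hXw hXw hX0 hw0
      _ = w^2 := (pow_two w).symm
  have hNR2 : opnA A (R^(2:ℕ)) ≤ w^2 := hsqbound R hR hNR hNR0
  have hNIm2 : opnA A (Im^(2:ℕ)) ≤ w^2 := hsqbound Im hIm hNIm hNIm0
  have hNG : opnA A G ≤ w^2 := by
    rw [hGdef]
    calc opnA A ((2:ℂ)⁻¹ • (R^(2:ℕ) + Im^(2:ℕ)))
        ≤ ‖(2:ℂ)⁻¹‖ * opnA A (R^(2:ℕ) + Im^(2:ℕ)) := opnA_smul_le hB hadj hne saSum _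
      _ ≤ 2⁻¹ * (opnA A (R^(2:ℕ)) + opnA A (Im^(2:ℕ))) := by
          have h6 : ‖(2:ℂ)⁻¹‖ = (2:ℝ)⁻¹ := by norm_num
          rw [h6]
          exact mul_le_mul_of_nonneg_left (opnA_add_le hB hadj hne saR2 saIm2) (by norm_num)
      _ ≤ 2⁻¹ * (w^2 + w^2) := by
          have := add_le_add hNR2 hNIm2
          exact mul_le_mul_of_nonneg_left this (by norm_num)
      _ = w^2 := by ring
  -- continuity and integrability of the two integrands
  have hcont1 := contF hB hadj hne saR2 saG
  have hcont2 := contF hB hadj hne saIm2 saG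
  have hint1 : IntervalIntegrable (fun l : ℝ => opnA A ((l:ℂ) • R^(2:ℕ) + ((1:ℂ)-(l:ℂ)) • G))
      MeasureTheory.volume 0 1 := hcont1.intervalIntegrable _ _
  have hint2 : IntervalIntegrable (fun l : ℝ => opnA A ((l:ℂ) • Im^(2:ℕ) + ((1:ℂ)-(l:ℂ)) • G))
      MeasureTheory.volume 0 1 := hcont2.intervalIntegrable _ _
  have hpt1 := ptF hB hadj hne saR2 saG hNR2 hNG
  have hpt2 := ptF hB hadj hne saIm2 saG hNIm2 hNG
  have hI1 : (∫ l in (0:ℝ)..1, opnA A ((l:ℂ) • R^(2:ℕ) + ((1:ℂ)-(l:ℂ)) • G)) ≤ w^2 := by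
    calc (∫ l in (0:ℝ)..1, opnA A ((l:ℂ) • R^(2:ℕ) + ((1:ℂ)-(l:ℂ)) • G))
        ≤ ∫ _ in (0:ℝ)..1, w^2 :=
          intervalIntegral.integral_mono_on zero_le_one hint1 intervalIntegrable_const hpt1
      _ = w^2 := by simp
  have hI2 : (∫ l in (0:ℝ)..1, opnA A ((l:ℂ) • Im^(2:ℕ) + ((1:ℂ)-(l:ℂ)) • G)) ≤ w^2 := by
    calc (∫ l in (0:ℝ)..1, opnA A ((l:ℂ) • Im^(2:ℕ) + ((1:ℂ)-(l:ℂ)) • G))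
        ≤ ∫ _ in (0:ℝ)..1, w^2 :=
          intervalIntegral.integral_mono_on zero_le_one hint2 intervalIntegrable_const hpt2
      _ = w^2 := by simp
  -- the algebraic identity
  have hI2c : (2*Complex.I)⁻¹ * (2*Complex.I)⁻¹ = -(4:ℂ)⁻¹ := by
    rw [← mul_inv]
    have : (2*Complex.I) * (2*Complex.I) = -4 := by
      have := Complex.I_mul_I
      ring_nf
      rw [Complex.I_sq]
      ring
    rw [this]
    norm_num
  have opid : R^(2:ℕ) + Im^(2:ℕ) = (2:ℂ)⁻¹ • (Ts ∘L T + T ∘L Ts) := by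
    rw [hRdef, hImdef, ReA, ImA, pow_two, pow_two]
    rw [smul_mul_smul_comm, smul_mul_smul_comm, hI2c]
    rw [show Ts ∘L T = Ts * T from rfl, show T ∘L Ts = T * Ts from rfl]
    rw [mul_add, add_mul, add_mul, mul_sub, sub_mul, sub_mul]
    have h4 : (2:ℂ)⁻¹ * 2⁻¹ = (4:ℂ)⁻¹ := by norm_num
    rw [h4]
    module
  have hX1 : Ts ∘L T + T ∘L Ts = (2:ℂ) • (R^(2:ℕ) + Im^(2:ℕ)) := by
    rw [opid, smul_smul]
    norm_num
  have hsum : ∀ l : ℝ, ((l:ℂ) • R^(2:ℕ) + ((1:ℂ)-(l:ℂ)) • G)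
      + ((l:ℂ) • Im^(2:ℕ) + ((1:ℂ)-(l:ℂ)) • G) = R^(2:ℕ) + Im^(2:ℕ) := by
    intro l
    rw [hGdef]
    module
  -- first inequality, pointwise
  have hlowpt : ∀ l ∈ Set.Icc (0:ℝ) 1,
      (1/4) * opnA A (Ts ∘L T + T ∘L Ts)
        ≤ (1/2) * opnA A ((l:ℂ) • R^(2:ℕ) + ((1:ℂ)-(l:ℂ)) • G)
          + (1/2) * opnA A ((l:ℂ) • Im^(2:ℕ) + ((1:ℂ)-(l:ℂ)) • G) := by
    intro l _
    have saf1 : A * ((l:ℂ) • R^(2:ℕ) + ((1:ℂ)-(l:ℂ)) • G)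
        = adjoint ((l:ℂ) • R^(2:ℕ) + ((1:ℂ)-(l:ℂ)) • G) * A := by
      have h1l : ((1:ℂ) - (l:ℂ)) = (((1 - l : ℝ)):ℂ) := by push_cast; ring
      rw [h1l]
      exact sa_add (sa_smul_real l saR2) (sa_smul_real _ saG)
    have saf2 : A * ((l:ℂ) • Im^(2:ℕ) + ((1:ℂ)-(l:ℂ)) • G)
        = adjoint ((l:ℂ) • Im^(2:ℕ) + ((1:ℂ)-(l:ℂ)) • G) * A := by
      have h1l : ((1:ℂ) - (l:ℂ)) = (((1 - l : ℝ)):ℂ) := by push_cast; ring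
      rw [h1l]
      exact sa_add (sa_smul_real l saIm2) (sa_smul_real _ saG)
    have step : opnA A (Ts ∘L T + T ∘L Ts)
        ≤ 2 * (opnA A ((l:ℂ) • R^(2:ℕ) + ((1:ℂ)-(l:ℂ)) • G)
          + opnA A ((l:ℂ) • Im^(2:ℕ) + ((1:ℂ)-(l:ℂ)) • G)) := by
      rw [hX1]
      calc opnA A ((2:ℂ) • (R^(2:ℕ) + Im^(2:ℕ)))
          ≤ ‖(2:ℂ)‖ * opnA A (R^(2:ℕ) + Im^(2:ℕ)) := opnA_smul_le hB hadj hne saSum _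
        _ = 2 * opnA A (((l:ℂ) • R^(2:ℕ) + ((1:ℂ)-(l:ℂ)) • G)
            + ((l:ℂ) • Im^(2:ℕ) + ((1:ℂ)-(l:ℂ)) • G)) := by
            rw [← hsum l]
            norm_num
        _ ≤ 2 * (opnA A ((l:ℂ) • R^(2:ℕ) + ((1:ℂ)-(l:ℂ)) • G)
            + opnA A ((l:ℂ) • Im^(2:ℕ) + ((1:ℂ)-(l:ℂ)) • G)) := by
            have := opnA_add_le hB hadj hne saf1 saf2
            linarith
    linarith
  -- integrate the first inequality
  have hfirst : (1/4) * opnA A (Ts ∘L T + T ∘L Ts)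
      ≤ (1/2) * (∫ l in (0:ℝ)..1, opnA A ((l:ℂ) • R^(2:ℕ) + ((1:ℂ)-(l:ℂ)) • G))
        + (1/2) * (∫ l in (0:ℝ)..1, opnA A ((l:ℂ) • Im^(2:ℕ) + ((1:ℂ)-(l:ℂ)) • G)) := by
    have hintc : IntervalIntegrable (fun _ : ℝ => (1/4) * opnA A (Ts ∘L T + T ∘L Ts))
        MeasureTheory.volume 0 1 := intervalIntegrable_const
    have hintrhs : IntervalIntegrable (fun l : ℝ =>
        (1/2) * opnA A ((l:ℂ) • R^(2:ℕ) + ((1:ℂ)-(l:ℂ)) • G)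
          + (1/2) * opnA A ((l:ℂ) • Im^(2:ℕ) + ((1:ℂ)-(l:ℂ)) • G))
        MeasureTheory.volume 0 1 := (hint1.const_mul _).add (hint2.const_mul _)
    calc (1/4) * opnA A (Ts ∘L T + T ∘L Ts)
        = ∫ _ in (0:ℝ)..1, (1/4) * opnA A (Ts ∘L T + T ∘L Ts) := by simp
      _ ≤ ∫ l in (0:ℝ)..1, ((1/2) * opnA A ((l:ℂ) • R^(2:ℕ) + ((1:ℂ)-(l:ℂ)) • G)
            + (1/2) * opnA A ((l:ℂ) • Im^(2:ℕ) + ((1:ℂ)-(l:ℂ)) • G)) :=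
          intervalIntegral.integral_mono_on zero_le_one hintc hintrhs hlowpt
      _ = (1/2) * (∫ l in (0:ℝ)..1, opnA A ((l:ℂ) • R^(2:ℕ) + ((1:ℂ)-(l:ℂ)) • G))
          + (1/2) * (∫ l in (0:ℝ)..1, opnA A ((l:ℂ) • Im^(2:ℕ) + ((1:ℂ)-(l:ℂ)) • G)) := by
          rw [intervalIntegral.integral_add (hint1.const_mul _) (hint2.const_mul _),
            intervalIntegral.integral_const_mul, intervalIntegral.integral_const_mul]
  refine ⟨hfirst, ?_⟩
  calc (1/2) * (∫ l in (0:ℝ)..1, opnA A ((l:ℂ) • R^(2:ℕ) + ((1:ℂ)-(l:ℂ)) • G))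
      + (1/2) * (∫ l in (0:ℝ)..1, opnA A ((l:ℂ) • Im^(2:ℕ) + ((1:ℂ)-(l:ℂ)) • G))
      ≤ (1/2) * w^2 + (1/2) * w^2 := by
        have ha := mul_le_mul_of_nonneg_left hI1 (by norm_num : (0:ℝ) ≤ 1/2)
        have hb := mul_le_mul_of_nonneg_left hI2 (by norm_num : (0:ℝ) ≤ 1/2)
        linarith
    _ = w^2 := by ring
end
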